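/- arXiv:2509.19886 — 2 statements merged into one kernel-verified Lean document; each statement's English description precedes it below -/
import Mathlib

section
/- For λ, μ > 0 and x ∈ ℝ^N, let ψ(x) = -Nμ·ln(Σ_{n=1}^N (e^{x_n/λ} + e^{-x_n/λ})^{-λ/μ}). Then for fixed μ > 0, as λ → 0⁺ and then μ → 0⁺ (or jointly), ψ(x) converges to N·min_n |x_n|. -/
open Real Filter Topology Finset

lemma ulpens_aux (N : ℕ) (hN : 0 < N) (x : Fin N → ℝ) (M l u : ℝ)
    (hl : 0 < l) (hu : 0 < u) (hMle : ∀ n, M ≤ |x n|) (hMex : ∃ n, M = |x n|) :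
    (N : ℝ) * M - (N : ℝ) * u * Real.log N ≤
      -(N : ℝ) * u * Real.log (∑ n, (Real.exp (x n / l) + Real.exp (-x n / l)) ^ (-(l / u))) ∧
    -(N : ℝ) * u * Real.log (∑ n, (Real.exp (x n / l) + Real.exp (-x n / l)) ^ (-(l / u))) ≤
      (N : ℝ) * M + (N : ℝ) * l * Real.log 2 := by
  set c := l / u with hc
  have hcpos : 0 < c := div_pos hl hu
  set S := ∑ n, (Real.exp (x n / l) + Real.exp (-x n / l)) ^ (-c) with hSdef
  have hbasepos : ∀ n : Fin N, 0 < Real.exp (x n / l) + Real.exp (-x n / l) :=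
    fun n => by positivity
  have htermpos : ∀ n : Fin N, 0 < (Real.exp (x n / l) + Real.exp (-x n / l)) ^ (-c) :=
    fun n => Real.rpow_pos_of_pos (hbasepos n) _
  have hSpos : 0 < S :=
    Finset.sum_pos (fun n _ => htermpos n) ⟨⟨0, hN⟩, Finset.mem_univ _⟩
  have hexp_rpow : ∀ a : ℝ, Real.exp (a / l) ^ (-c) = Real.exp (-a / u) := by
    intro a
    rw [← Real.exp_mul]
    congr 1
    rw [hc]
    field_simp
  -- upper bound on S
  have hupper : S ≤ (N : ℝ) * Real.exp (-M / u) := by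
    have : S ≤ ∑ _n : Fin N, Real.exp (-M / u) := by
      apply Finset.sum_le_sum
      intro n _
      have h1 : Real.exp (|x n| / l) ≤ Real.exp (x n / l) + Real.exp (-x n / l) := by
        rcases abs_cases (x n) with ⟨h, _⟩ | ⟨h, _⟩
        · rw [h]; nlinarith [Real.exp_pos (-x n / l)]
        · rw [h, neg_div]; nlinarith [Real.exp_pos (x n / l)]
      have h2 : (Real.exp (x n / l) + Real.exp (-x n / l)) ^ (-c) ≤
          Real.exp (|x n| / l) ^ (-c) :=
        Real.rpow_le_rpow_of_nonpos (Real.exp_pos _) h1 (neg_nonpos.mpr hcpos.le)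
      have h3 : Real.exp (-(|x n|) / u) ≤ Real.exp (-M / u) := by
        apply Real.exp_le_exp.mpr
        have : -|x n| ≤ -M := neg_le_neg (hMle n)
        gcongr
      calc (Real.exp (x n / l) + Real.exp (-x n / l)) ^ (-c)
          ≤ Real.exp (|x n| / l) ^ (-c) := h2
        _ = Real.exp (-(|x n|) / u) := hexp_rpow _
        _ ≤ Real.exp (-M / u) := h3
    simpa using this
  -- lower bound on S
  have hlower : (2 : ℝ) ^ (-c) * Real.exp (-M / u) ≤ S := by
    obtain ⟨n0, hn0⟩ := hMex
    have h1 : Real.exp (x n0 / l) + Real.exp (-x n0 / l) ≤ 2 * Real.exp (M / l) := by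
      have hx1 : x n0 / l ≤ M / l := by
        have : x n0 ≤ M := by rw [hn0]; exact le_abs_self _
        gcongr
      have hx2 : -x n0 / l ≤ M / l := by
        have : -x n0 ≤ M := by rw [hn0]; exact neg_le_abs _
        gcongr
      have := Real.exp_le_exp.mpr hx1
      have := Real.exp_le_exp.mpr hx2
      linarith
    have h2 : (2 * Real.exp (M / l)) ^ (-c) ≤
        (Real.exp (x n0 / l) + Real.exp (-x n0 / l)) ^ (-c) :=
      Real.rpow_le_rpow_of_nonpos (hbasepos n0) h1 (neg_nonpos.mpr hcpos.le)
    have h3 : (2 * Real.exp (M / l)) ^ (-c) = (2 : ℝ) ^ (-c) * Real.exp (-M / u) := by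
      rw [Real.mul_rpow (by norm_num) (Real.exp_pos _).le, hexp_rpow]
    have h4 : (Real.exp (x n0 / l) + Real.exp (-x n0 / l)) ^ (-c) ≤ S :=
      Finset.single_le_sum (fun n _ => (htermpos n).le) (Finset.mem_univ n0)
    linarith [h3 ▸ h2]
  -- log bounds
  have hlogU : Real.log S ≤ Real.log N + (-M / u) := by
    have := Real.log_le_log hSpos hupper
    rwa [Real.log_mul (by positivity) (Real.exp_pos _).ne', Real.log_exp] at this
  have hlogL : (-c) * Real.log 2 + (-M / u) ≤ Real.log S := by
    have h0 : (0:ℝ) < (2:ℝ) ^ (-c) * Real.exp (-M / u) := by positivity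
    have := Real.log_le_log h0 hlower
    rwa [Real.log_mul (by positivity) (Real.exp_pos _).ne', Real.log_exp,
      Real.log_rpow (by norm_num)] at this
  constructor
  · have h := mul_le_mul_of_nonneg_left hlogU (by positivity : (0:ℝ) ≤ (N:ℝ) * u)
    have e : (N:ℝ) * u * (Real.log N + -M / u) = (N:ℝ) * u * Real.log N - (N:ℝ) * M := by
      field_simp
      ring
    linarith [h, e.symm.le]
  · have h := mul_le_mul_of_nonneg_left hlogL (by positivity : (0:ℝ) ≤ (N:ℝ) * u)
    have e : (N:ℝ) * u * (-c * Real.log 2 + -M / u) =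
        -((N:ℝ) * l * Real.log 2) - (N:ℝ) * M := by
      rw [hc]
      field_simp
      ring
    linarith [h, e.le]

theorem stmt_10 (N : ℕ) (hN : 0 < N) (x : Fin N → ℝ) :
    Tendsto
      (fun p : ℝ × ℝ =>
        -(N : ℝ) * p.2 *
          Real.log (∑ n, (Real.exp (x n / p.1) + Real.exp (-x n / p.1)) ^ (-(p.1 / p.2))))
      ((𝓝[>] 0) ×ˢ (𝓝[>] 0))
      (𝓝 ((N : ℝ) * Finset.univ.inf' ⟨⟨0, hN⟩, Finset.mem_univ _⟩ (fun n => |x n|))) := by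
  set M := Finset.univ.inf' ⟨⟨0, hN⟩, Finset.mem_univ _⟩ (fun n => |x n|) with hM
  have hMle : ∀ n, M ≤ |x n| := fun n => Finset.inf'_le _ (Finset.mem_univ n)
  have hMex : ∃ n, M = |x n| := by
    obtain ⟨n, _, hn⟩ := Finset.exists_mem_eq_inf' (⟨⟨0, hN⟩, Finset.mem_univ _⟩ :
      (Finset.univ : Finset (Fin N)).Nonempty) (fun n => |x n|)
    exact ⟨n, hn⟩
  have hev : ∀ᶠ p : ℝ × ℝ in (𝓝[>] (0:ℝ)) ×ˢ (𝓝[>] (0:ℝ)), 0 < p.1 ∧ 0 < p.2 :=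
    Filter.Eventually.prod_mk self_mem_nhdsWithin self_mem_nhdsWithin
  have htl : Tendsto (fun p : ℝ × ℝ => p.1) ((𝓝[>] (0:ℝ)) ×ˢ (𝓝[>] (0:ℝ))) (𝓝 0) :=
    tendsto_fst.mono_right nhdsWithin_le_nhds
  have htu : Tendsto (fun p : ℝ × ℝ => p.2) ((𝓝[>] (0:ℝ)) ×ˢ (𝓝[>] (0:ℝ))) (𝓝 0) :=
    tendsto_snd.mono_right nhdsWithin_le_nhds
  have hg : Tendsto (fun p : ℝ × ℝ => (N : ℝ) * M - (N : ℝ) * p.2 * Real.log N)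
      ((𝓝[>] (0:ℝ)) ×ˢ (𝓝[>] (0:ℝ))) (𝓝 ((N : ℝ) * M)) := by
    have h1 : Tendsto (fun p : ℝ × ℝ => (N : ℝ) * M - (N : ℝ) * p.2 * Real.log N)
        ((𝓝[>] (0:ℝ)) ×ˢ (𝓝[>] (0:ℝ))) (𝓝 ((N : ℝ) * M - (N : ℝ) * 0 * Real.log N)) :=
      Tendsto.sub tendsto_const_nhds ((htu.const_mul _).mul_const _)
    simpa using h1
  have hh : Tendsto (fun p : ℝ × ℝ => (N : ℝ) * M + (N : ℝ) * p.1 * Real.log 2)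
      ((𝓝[>] (0:ℝ)) ×ˢ (𝓝[>] (0:ℝ))) (𝓝 ((N : ℝ) * M)) := by
    have h1 : Tendsto (fun p : ℝ × ℝ => (N : ℝ) * M + (N : ℝ) * p.1 * Real.log 2)
        ((𝓝[>] (0:ℝ)) ×ˢ (𝓝[>] (0:ℝ))) (𝓝 ((N : ℝ) * M + (N : ℝ) * 0 * Real.log 2)) :=
      Tendsto.add tendsto_const_nhds ((htl.const_mul _).mul_const _)
    simpa using h1
  refine tendsto_of_tendsto_of_tendsto_of_le_of_le' hg hh ?_ ?_
  · filter_upwards [hev] with p hp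
    exact (ulpens_aux N hN x M p.1 p.2 hp.1 hp.2 hMle hMex).1
  · filter_upwards [hev] with p hp
    exact (ulpens_aux N hN x M p.1 p.2 hp.1 hp.2 hMle hMex).2
end

section
/- For λ, μ > 0 and x ∈ ℝ^N, the off-diagonal entries (n ≠ m) of the Hessian of ψ(x) = -Nμ·ln(Σ_{n=1}^N (e^{x_n/λ}+e^{-x_n/λ})^{-λ/μ}) are given by H_{m,n}(x) = (N/μ)·tanh(x_n/λ)·φ_n(x)·tanh(x_m/λ)·φ_m(x), where φ_n(x) = (e^{x_n/λ}+e^{-x_n/λ})^{-λ/μ} / Σ_k (e^{x_k/λ}+e^{-x_k/λ})^{-λ/μ}. -/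
open Real Finset

private lemma base_pos (l t : ℝ) : 0 < Real.exp (t / l) + Real.exp (-t / l) := by
  positivity

private lemma tanh_formula (u : ℝ) :
    Real.tanh u = (Real.exp u - Real.exp (-u)) / (Real.exp u + Real.exp (-u)) := by
  have h : Real.exp u + Real.exp (-u) ≠ 0 := by positivity
  rw [Real.tanh_eq_sinh_div_cosh, Real.sinh_eq, Real.cosh_eq]
  field_simp

private lemma hasDerivAt_tanh' (u : ℝ) :
    HasDerivAt Real.tanh (1 - Real.tanh u ^ 2) u := by
  have h : HasDerivAt (fun y => Real.sinh y / Real.cosh y) _ u := (Real.hasDerivAt_sinh u).fun_div (Real.hasDerivAt_cosh u) (Real.cosh_pos u).ne'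
  simp only [← Real.tanh_eq_sinh_div_cosh] at h
  convert h using 1
  have hc := (Real.cosh_pos u).ne'
  rw [Real.tanh_eq_sinh_div_cosh]
  field_simp

private lemma hasDerivAt_c (l m : ℝ) (hl : 0 < l) (hm : 0 < m) (t : ℝ) :
    HasDerivAt (fun t : ℝ => (Real.exp (t / l) + Real.exp (-t / l)) ^ (-(l / m)))
      (-(1 / m) * ((Real.exp (t / l) + Real.exp (-t / l)) ^ (-(l / m))) *
        Real.tanh (t / l)) t := by
  have h1 : HasDerivAt (fun t : ℝ => Real.exp (t / l)) (Real.exp (t / l) * (1 / l)) t :=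
    ((hasDerivAt_id t).div_const l).exp
  have h2 : HasDerivAt (fun t : ℝ => Real.exp (-t / l)) (Real.exp (-t / l) * (-1 / l)) t :=
    (((hasDerivAt_id t).neg).div_const l).exp
  have hb : HasDerivAt (fun t : ℝ => Real.exp (t / l) + Real.exp (-t / l)) _ t := h1.add h2
  have hbpos := base_pos l t
  have hc := hb.rpow_const (p := -(l / m)) (Or.inl hbpos.ne')
  convert hc using 1
  rw [Real.rpow_sub_one hbpos.ne']
  rw [tanh_formula]
  have hexp : Real.exp (-t / l) = Real.exp (-(t / l)) := by rw [neg_div]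
  rw [hexp] at hbpos ⊢
  field_simp
  ring

private lemma hasFDerivAt_S (N : ℕ) (l m : ℝ) (hl : 0 < l) (hm : 0 < m) (y : Fin N → ℝ) :
    HasFDerivAt (fun z : Fin N → ℝ =>
        ∑ n, (Real.exp (z n / l) + Real.exp (-z n / l)) ^ (-(l / m)))
      (∑ n, (-(1 / m) * ((Real.exp (y n / l) + Real.exp (-y n / l)) ^ (-(l / m))) *
          Real.tanh (y n / l)) • ContinuousLinearMap.proj (R := ℝ) (φ := fun _ : Fin N => ℝ) n)
      y := by
  apply HasFDerivAt.fun_sum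
  intro n _
  exact (hasDerivAt_c l m hl hm (y n)).comp_hasFDerivAt y (hasFDerivAt_apply (𝕜 := ℝ) n y)

private lemma S_pos (N : ℕ) (l m : ℝ) (y : Fin N → ℝ) (hN : 0 < N) :
    0 < ∑ n, (Real.exp (y n / l) + Real.exp (-y n / l)) ^ (-(l / m)) := by
  apply Finset.sum_pos
  · intro n _
    exact Real.rpow_pos_of_pos (base_pos l (y n)) _
  · exact Finset.univ_nonempty_iff.mpr (Fin.pos_iff_nonempty.mp hN)

private lemma inner_deriv (N : ℕ) (l m : ℝ) (hl : 0 < l) (hm : 0 < m) (hN : 0 < N)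
    (j : Fin N) (y : Fin N → ℝ) :
    fderiv ℝ
      (fun z : Fin N → ℝ =>
        -(N : ℝ) * m *
          Real.log (∑ n, (Real.exp (z n / l) + Real.exp (-z n / l)) ^ (-(l / m))))
      y (Pi.single j 1)
    = (-(N : ℝ) * m) *
        ((-(1 / m) * ((Real.exp (y j / l) + Real.exp (-y j / l)) ^ (-(l / m))) *
            Real.tanh (y j / l)) *
          (∑ n, (Real.exp (y n / l) + Real.exp (-y n / l)) ^ (-(l / m)))⁻¹) := by
  have hS := hasFDerivAt_S N l m hl hm y
  have hSpos := S_pos N l m y hN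
  have hlog := (Real.hasDerivAt_log hSpos.ne').comp_hasFDerivAt y hS
  have hψ := hlog.const_mul (-(N : ℝ) * m)
  simp only [Function.comp_def] at hψ
  rw [hψ.fderiv]
  simp only [ContinuousLinearMap.smul_apply, ContinuousLinearMap.sum_apply,
    ContinuousLinearMap.proj_apply, smul_eq_mul]
  simp only [Pi.single_apply, mul_ite, mul_one, mul_zero, Finset.sum_ite_eq',
    Finset.mem_univ, if_true]
  ring

set_option maxHeartbeats 1000000 in
theorem stmt_18 (N : ℕ) (l m : ℝ) (hl : 0 < l) (hm : 0 < m) (x : Fin N → ℝ)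
    (i j : Fin N) (hij : i ≠ j) :
    (fderiv ℝ
        (fun y : Fin N → ℝ =>
          fderiv ℝ
            (fun z : Fin N → ℝ =>
              -(N : ℝ) * m *
                Real.log (∑ n, (Real.exp (z n / l) + Real.exp (-z n / l)) ^ (-(l / m))))
            y (Pi.single j 1))
        x) (Pi.single i 1)
      = (N : ℝ) / m * Real.tanh (x j / l) *
          ((Real.exp (x j / l) + Real.exp (-x j / l)) ^ (-(l / m)) /
            ∑ k, (Real.exp (x k / l) + Real.exp (-x k / l)) ^ (-(l / m))) *
          Real.tanh (x i / l) *
          ((Real.exp (x i / l) + Real.exp (-x i / l)) ^ (-(l / m)) /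
            ∑ k, (Real.exp (x k / l) + Real.exp (-x k / l)) ^ (-(l / m))) := by
  have hN : 0 < N := Fin.pos_iff_nonempty.mpr ⟨i⟩
  have hfun : (fun y : Fin N → ℝ =>
      fderiv ℝ
        (fun z : Fin N → ℝ =>
          -(N : ℝ) * m *
            Real.log (∑ n, (Real.exp (z n / l) + Real.exp (-z n / l)) ^ (-(l / m))))
        y (Pi.single j 1))
      = fun y : Fin N → ℝ =>
        (-(N : ℝ) * m) *
          ((-(1 / m) * ((Real.exp (y j / l) + Real.exp (-y j / l)) ^ (-(l / m))) *
              Real.tanh (y j / l)) *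
            (∑ n, (Real.exp (y n / l) + Real.exp (-y n / l)) ^ (-(l / m)))⁻¹) := by
    funext y
    exact inner_deriv N l m hl hm hN j y
  rw [hfun]
  have hSpos := S_pos N l m x hN
  -- derivative of the numerator (as a function of y)
  have htanh : HasDerivAt (fun t : ℝ => Real.tanh (t / l))
      ((1 - Real.tanh (x j / l) ^ 2) * (1 / l)) (x j) :=
    (hasDerivAt_tanh' (x j / l)).comp (h₂ := Real.tanh) (x j) ((hasDerivAt_id' (x j)).div_const l)
  have hcj := hasDerivAt_c l m hl hm (x j)
  have hnum1 := (HasDerivAt.const_mul (-(1 / m) : ℝ) hcj).mul htanh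
  have hnum := hnum1.comp_hasFDerivAt x (hasFDerivAt_apply (𝕜 := ℝ) j x)
  have hS' := hasFDerivAt_S N l m hl hm x
  have hinv := (hasDerivAt_inv hSpos.ne').comp_hasFDerivAt x hS'
  simp only [Function.comp_def, Pi.mul_apply] at hnum hinv
  have hg := (hnum.mul hinv).const_mul (-(N : ℝ) * m)
  erw [hg.fderiv]
  simp only [Pi.mul_apply, ContinuousLinearMap.smul_apply, ContinuousLinearMap.add_apply,
    ContinuousLinearMap.sum_apply, ContinuousLinearMap.proj_apply, smul_eq_mul]
  have hS0 : (∑ n, (Real.exp (x n / l) + Real.exp (-x n / l)) ^ (-(l / m))) ≠ 0 :=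
    hSpos.ne'
  simp only [Pi.single_apply, mul_ite, mul_one, mul_zero, Finset.sum_ite_eq',
    Finset.mem_univ, if_true, if_neg hij.symm]
  set S := (∑ n, (Real.exp (x n / l) + Real.exp (-x n / l)) ^ (-(l / m))) with hSd
  set cj := (Real.exp (x j / l) + Real.exp (-x j / l)) ^ (-(l / m)) with hcjd
  set ci := (Real.exp (x i / l) + Real.exp (-x i / l)) ^ (-(l / m)) with hcid
  set tj := Real.tanh (x j / l) with htjd
  set ti := Real.tanh (x i / l) with htid
  field_simp
  ring
end
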